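/- The Prouhet–Thue–Morse generating series F(X) = Σ_{n≥0} t_n X^n over F_2 satisfies the algebraic equation (1+X)^3 F(X)^2 + (1+X^2) F(X) + X = 0. -/

import Mathlib

open PowerSeries

lemma zmod2_mul_self (a : ZMod 2) : a * a = a := by revert a; decide

lemma coeff_sq (t : ℕ → ZMod 2) (n : ℕ) :
    (PowerSeries.coeff n) ((PowerSeries.mk t) ^ 2)
      = if Even n then t (n / 2) else 0 := by
  rw [sq, PowerSeries.coeff_mul]
  simp only [PowerSeries.coeff_mk]
  by_cases h : Even n
  · rw [if_pos h]
    obtain ⟨m, hm⟩ := h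
    have hmem : (m, m) ∈ Finset.HasAntidiagonal.antidiagonal n := by
      simp [Finset.HasAntidiagonal.mem_antidiagonal]; omega
    rw [← Finset.add_sum_erase _ _ hmem]
    have hz : ∑ p ∈ (Finset.HasAntidiagonal.antidiagonal n).erase (m, m), t p.1 * t p.2 = 0 := by
      apply Finset.sum_involution (fun p _ => (p.2, p.1))
      · intro p hp
        rw [mul_comm]
        exact CharTwo.add_self_eq_zero _
      · intro p hp _
        simp only [Finset.mem_erase, Finset.HasAntidiagonal.mem_antidiagonal] at hp
        intro hcon
        apply hp.1
        have h1 : p.2 = p.1 := congrArg Prod.fst hcon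
        have h2 : p.1 + p.2 = n := hp.2
        have : p.1 = m := by omega
        have : p.2 = m := by omega
        exact Prod.ext ‹p.1 = m› ‹p.2 = m›
      · intro p hp
        simp only [Finset.mem_erase, Finset.HasAntidiagonal.mem_antidiagonal] at hp ⊢
        constructor
        · intro hcon
          apply hp.1
          have h1 : p.2 = m := congrArg Prod.fst hcon
          have h2 : p.1 = m := congrArg Prod.snd hcon
          exact Prod.ext h2 h1
        · omega
      · intro p hp; rfl
    rw [hz, add_zero, zmod2_mul_self]
    congr 1
    omega
  · rw [if_neg h]
    apply Finset.sum_involution (fun p _ => (p.2, p.1))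
    · intro p hp
      rw [mul_comm]
      exact CharTwo.add_self_eq_zero _
    · intro p hp _
      simp only [Finset.HasAntidiagonal.mem_antidiagonal] at hp
      intro hcon
      apply h
      have h1 : p.2 = p.1 := congrArg Prod.fst hcon
      exact ⟨p.1, by omega⟩
    · intro p hp
      simp only [Finset.HasAntidiagonal.mem_antidiagonal] at hp ⊢
      omega
    · intro p hp; rfl

theorem ptm_series_algebraic (t : ℕ → ZMod 2) (h0 : t 0 = 0)
    (he : ∀ n, t (2 * n) = t n) (ho : ∀ n, t (2 * n + 1) = 1 + t n) :
    (1 + X) ^ 3 * (PowerSeries.mk t) ^ 2 + (1 + X ^ 2) * PowerSeries.mk t + X = 0 := by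
  have two : (2 : PowerSeries (ZMod 2)) = 0 := by
    have h2 : (2 : PowerSeries (ZMod 2)) = PowerSeries.C 2 := by
      rw [map_ofNat]
    rw [h2, show (2 : ZMod 2) = 0 from rfl, map_zero]
  set F := PowerSeries.mk t with hF
  set G := PowerSeries.mk (fun n => if Even n then t (n / 2) else 0) with hG
  have hF2 : F ^ 2 = G := by
    ext n
    rw [hF, coeff_sq, hG, PowerSeries.coeff_mk]
  have expand : (1 + X) ^ 3 * F ^ 2 + (1 + X ^ 2) * F + X
      = (G + G * X ^ 1 + G * X ^ 2 + G * X ^ 3) + (F + F * X ^ 2) + X ^ 1 := by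
    linear_combination (1 + X) ^ 3 * hF2 + (X + X ^ 2) * G * two
  rw [expand]
  ext n
  simp only [map_add, PowerSeries.coeff_mul_X_pow', hF, hG, PowerSeries.coeff_mk,
    PowerSeries.coeff_X_pow, map_zero]
  rcases Nat.even_or_odd n with ⟨m, rfl⟩ | ⟨m, rfl⟩
  · rcases m with _ | m
    · simp [h0]
    · rw [show m + 1 + (m + 1) = 2 * (m + 1) from by ring]
      simp only [if_pos (even_two_mul (m + 1)),
        if_pos (by omega : 1 ≤ 2 * (m + 1)),
        if_pos (by omega : 2 ≤ 2 * (m + 1)),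
        if_neg (by first | (simp [Nat.even_sub, Nat.even_iff]; omega) | simp [Nat.even_sub, Nat.even_iff] : ¬ Even (2 * (m + 1) - 1)),
        if_pos (by first | (simp [Nat.even_sub, Nat.even_iff]; omega) | simp [Nat.even_sub, Nat.even_iff] : Even (2 * (m + 1) - 2)),
        if_neg (by omega : ¬ (2 * (m + 1) = 1))]
      rw [show 2 * (m + 1) - 2 = 2 * m from by omega,
        show 2 * (m + 1) / 2 = m + 1 from by omega,
        show 2 * m / 2 = m from by omega]
      rcases le_or_gt 3 (2 * (m + 1)) with h3 | h3
      · simp only [if_pos h3,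
          if_neg (by first | (simp [Nat.even_sub, Nat.even_iff]; omega) | simp [Nat.even_sub, Nat.even_iff] : ¬ Even (2 * (m + 1) - 3))]
        rw [he, he]
        generalize t (m + 1) = a
        generalize t m = b
        revert a b; decide
      · have hm : m = 0 := by omega
        subst hm
        rw [if_neg (by omega)]
        rw [he, he]
        generalize t 1 = a
        generalize t 0 = b
        revert a b; decide
  · rcases m with _ | m
    · norm_num
      have h1 : t 1 = 1 + t 0 := ho 0
      rw [h1, h0]
      decide
    · rw [show 2 * (m + 1) + 1 = 2 * m + 3 from by ring]
      simp only [if_neg (by first | (simp [Nat.even_iff]; omega) | simp [Nat.even_iff] : ¬ Even (2 * m + 3)),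
        if_pos (by omega : 1 ≤ 2 * m + 3),
        if_pos (by first | (simp [Nat.even_sub, Nat.even_iff]; omega) | simp [Nat.even_sub, Nat.even_iff] : Even (2 * m + 3 - 1)),
        if_pos (by omega : 2 ≤ 2 * m + 3),
        if_neg (by first | (simp [Nat.even_sub, Nat.even_iff]; omega) | simp [Nat.even_sub, Nat.even_iff] : ¬ Even (2 * m + 3 - 2)),
        if_pos (by omega : 3 ≤ 2 * m + 3),
        if_pos (by first | (simp [Nat.even_sub, Nat.even_iff]; omega) | simp [Nat.even_sub, Nat.even_iff] : Even (2 * m + 3 - 3)),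
        if_neg (by omega : ¬ (2 * m + 3 = 1))]
      rw [show 2 * m + 3 - 1 = 2 * (m + 1) from by omega,
        show 2 * m + 3 - 2 = 2 * m + 1 from by omega,
        show 2 * m + 3 - 3 = 2 * m from by omega,
        show 2 * (m + 1) / 2 = m + 1 from by omega,
        show 2 * m / 2 = m from by omega,
        show 2 * m + 3 = 2 * (m + 1) + 1 from by ring]
      rw [ho, ho]
      generalize t (m + 1) = a
      generalize t m = b
      revert a b; decide
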